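/- If T₁ and T₂ are complex symplectic linear transformations of ℂ^{2n} that are non-negative (i.e., i(σ(conj(T X), T X) - σ(conj(X), X)) ≥ 0 for all X), then the composition T₁T₂ is also a non-negative complex symplectic linear transformation. -/
import Mathlib

open Matrix
open scoped ComplexOrder

/-- The standard symplectic matrix `[[0, Iₙ], [-Iₙ, 0]]`. -/
noncomputable def sympMat (n : ℕ) : Matrix (Fin n ⊕ Fin n) (Fin n ⊕ Fin n) ℂ :=
  Matrix.fromBlocks 0 1 (-1) 0

/-- The standard symplectic bilinear form `σ((x,ξ),(y,η)) = ⟨ξ,y⟩ - ⟨x,η⟩` on `ℂ^{2n}`. -/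
noncomputable def sympForm (n : ℕ) (X Y : Fin n ⊕ Fin n → ℂ) : ℂ :=
  (sympMat n *ᵥ X) ⬝ᵥ Y

/-- The composition of two non-negative complex symplectic linear transformations is again a
non-negative complex symplectic linear transformation. -/
theorem comp_nonneg_symplectic (n : ℕ)
    (T₁ T₂ : Matrix (Fin n ⊕ Fin n) (Fin n ⊕ Fin n) ℂ)
    (hT₁unit : IsUnit T₁.det) (hT₂unit : IsUnit T₂.det)
    (hT₁symp : ∀ X Y : Fin n ⊕ Fin n → ℂ, sympForm n (T₁ *ᵥ X) (T₁ *ᵥ Y) = sympForm n X Y)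
    (hT₂symp : ∀ X Y : Fin n ⊕ Fin n → ℂ, sympForm n (T₂ *ᵥ X) (T₂ *ᵥ Y) = sympForm n X Y)
    (hT₁nonneg : ∀ X : Fin n ⊕ Fin n → ℂ,
      0 ≤ Complex.I * (sympForm n (star (T₁ *ᵥ X)) (T₁ *ᵥ X) - sympForm n (star X) X))
    (hT₂nonneg : ∀ X : Fin n ⊕ Fin n → ℂ,
      0 ≤ Complex.I * (sympForm n (star (T₂ *ᵥ X)) (T₂ *ᵥ X) - sympForm n (star X) X)) :
    IsUnit (T₁ * T₂).det ∧
    (∀ X Y : Fin n ⊕ Fin n → ℂ,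
      sympForm n ((T₁ * T₂) *ᵥ X) ((T₁ * T₂) *ᵥ Y) = sympForm n X Y) ∧
    (∀ X : Fin n ⊕ Fin n → ℂ,
      0 ≤ Complex.I * (sympForm n (star ((T₁ * T₂) *ᵥ X)) ((T₁ * T₂) *ᵥ X)
            - sympForm n (star X) X)) := by
  refine ⟨by rw [Matrix.det_mul]; exact hT₁unit.mul hT₂unit, ?_, ?_⟩
  · intro X Y
    rw [← Matrix.mulVec_mulVec, ← Matrix.mulVec_mulVec, hT₁symp, hT₂symp]
  · intro X
    have h := add_nonneg (hT₁nonneg (T₂ *ᵥ X)) (hT₂nonneg X)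
    rw [← Matrix.mulVec_mulVec]
    convert h using 1
    ring
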